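/- There exists a constant c > 0 such that the following holds. For every finite simple graph G on n ≥ 2 vertices, every integer k ≥ 1, and every integer λ with 1 ≤ λ ≤ log₂ n, there is a partition of the vertex set of G into λ cluster collections (color classes), each being a cluster collection with Steiner radius ⌈c·k·n^{1/λ}·(log₂ n)³⌉ (and some congestion), such that any two distinct clusters in the same collection have dist_G strictly greater than k. -/

import Mathlib

open SimpleGraph

/-- `FarApart G k A B` : the `G`-distance between the vertex sets `A` and `B` is
strictly greater than `k`, i.e. every walk between a vertex of `A` and a vertex of `B`
has length greater than `k`. -/
def FarApart {V : Type} (G : SimpleGraph V) (k : ℕ) (A B : Set V) : Prop :=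
  ∀ u ∈ A, ∀ v ∈ B, ∀ p : G.Walk u v, k < p.length

/-- A cluster collection with Steiner radius `β` and congestion `κ` in `G`:
pairwise disjoint clusters, each contained in an associated connected Steiner subgraph
in which any two vertices are joined by a path of length at most `β`, and every edge of
`G` lies in at most `κ` of the Steiner subgraphs. -/
structure ClusterCollection {V : Type} (G : SimpleGraph V) (β κ : ℕ) where
  p : ℕ
  cluster : Fin p → Set V
  tree : Fin p → G.Subgraph
  disjoint : ∀ i j, i ≠ j → Disjoint (cluster i) (cluster j)
  subset_tree : ∀ i, cluster i ⊆ (tree i).verts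
  connected : ∀ i, ((tree i).coe).Preconnected
  radius : ∀ i, ∀ u v : (tree i).verts, ∃ w : ((tree i).coe).Walk u v, w.length ≤ β
  congestion : ∀ e ∈ G.edgeSet, {i : Fin p | e ∈ (tree i).edgeSet}.ncard ≤ κ

/-- A weak `(C, β)`-network decomposition with cluster distance `k` and congestion `κ`:
a partition of the vertices into `C` cluster collections (color classes), each with
Steiner radius `β` and congestion `κ`, such that any two distinct clusters of the same
color class are at `G`-distance strictly greater than `k`. -/
structure NetworkDecomposition {V : Type} (G : SimpleGraph V) (C β κ k : ℕ) where
  coll : Fin C → ClusterCollection G β κ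
  cover : ∀ v : V, ∃! ci : (c : Fin C) × Fin (coll c).p, v ∈ (coll ci.1).cluster ci.2
  sep : ∀ c : Fin C, ∀ i j : Fin (coll c).p, i ≠ j →
    FarApart G k ((coll c).cluster i) ((coll c).cluster j)


attribute [local instance] Classical.propDecidable

variable {V : Type} [Fintype V] (G : SimpleGraph V)

/-- Ball of radius m around v, as a Finset. -/
noncomputable def ballF (v : V) (m : ℕ) : Finset V :=
  Finset.univ.filter (fun u => ∃ p : G.Walk v u, p.length ≤ m)

lemma mem_ballF {v u : V} {m : ℕ} : u ∈ ballF G v m ↔ ∃ p : G.Walk v u, p.length ≤ m := by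
  simp [ballF]

lemma self_mem_ballF (v : V) (m : ℕ) : v ∈ ballF G v m :=
  (mem_ballF G).2 ⟨Walk.nil, by simp⟩

lemma ballF_mono {v : V} {m m' : ℕ} (h : m ≤ m') : ballF G v m ⊆ ballF G v m' := by
  intro u hu
  obtain ⟨p, hp⟩ := (mem_ballF G).1 hu
  exact (mem_ballF G).2 ⟨p, hp.trans h⟩

lemma support_subset_ballF {v u : V} {m : ℕ} (p : G.Walk v u) (hp : p.length ≤ m) :
    ∀ x ∈ p.support, x ∈ ballF G v m := by
  intro x hx
  exact (mem_ballF G).2 ⟨p.takeUntil x hx, (Walk.length_takeUntil_le p hx).trans hp⟩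

/-- Lift a walk whose support lies in s to the induced subgraph coe. -/
lemma walk_lift {s : Set V} : ∀ {a b : V} (p : G.Walk a b) (_ : ∀ x ∈ p.support, x ∈ s),
    ∀ (ha : a ∈ s) (hb : b ∈ s),
    ∃ q : ((⊤ : G.Subgraph).induce s).coe.Walk ⟨a, ha⟩ ⟨b, hb⟩, q.length = p.length := by
  intro a b p
  induction p with
  | nil => intro _ ha hb; exact ⟨Walk.nil, rfl⟩
  | @cons a c b h p ih =>
    intro hs ha hb
    have hc : c ∈ s := hs c (by simp)
    obtain ⟨q, hq⟩ := ih (fun x hx => hs x (by simp [hx])) hc hb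
    have hadj : ((⊤ : G.Subgraph).induce s).coe.Adj ⟨a, ha⟩ ⟨c, hc⟩ := by
      simp [Subgraph.induce_adj, ha, hc, h]
    exact ⟨Walk.cons hadj q, by simp [hq]⟩

set_option linter.unusedSectionVars false

/-- Properties of one carved color class. `cs` is a list of (center, radius, cluster). -/
noncomputable def bigU (cs : List (V × ℕ × Finset V)) : Finset V :=
  cs.foldr (fun e acc => e.2.2 ∪ acc) ∅

lemma mem_bigU {cs : List (V × ℕ × Finset V)} {x : V} :
    x ∈ bigU cs ↔ ∃ e ∈ cs, x ∈ e.2.2 := by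
  induction cs with
  | nil => simp [bigU]
  | cons a l ih => simp [bigU, Finset.mem_union] at ih ⊢; rw [ih]

lemma carve (k t : ℕ) (ht : 1 ≤ t) : ∀ (N : ℕ) (R : Finset V), R.card ≤ N →
    ∃ (cs : List (V × ℕ × Finset V)) (D : Finset V),
      (∀ e ∈ cs, e.2.2 ⊆ ballF G e.1 (e.2.1 * k) ∧
        (t+1)^e.2.1 ≤ Fintype.card V * t^e.2.1) ∧
      cs.Pairwise (fun a b => ∀ x ∈ b.2.2, x ∉ ballF G a.1 ((a.2.1+1) * k)) ∧
      R = bigU cs ∪ D ∧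
      (∀ e ∈ cs, Disjoint e.2.2 D) ∧
      (t+1) * D.card ≤ R.card := by
  intro N
  induction N with
  | zero =>
    intro R hR
    have : R = ∅ := Finset.card_eq_zero.1 (Nat.le_zero.1 hR)
    exact ⟨[], ∅, by simp, by simp, by simp [this, bigU], by simp, by simp⟩
  | succ N ih =>
    intro R hR
    rcases R.eq_empty_or_nonempty with rfl | ⟨v, hv⟩
    · exact ⟨[], ∅, by simp, by simp, by simp [bigU], by simp, by simp⟩
    · -- ball growth function
      set b : ℕ → ℕ := fun r => ((ballF G v (r * k)) ∩ R).card with hb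
      have hbmono : ∀ r, b r ≤ b (r+1) := by
        intro r
        exact Finset.card_le_card (Finset.inter_subset_inter
          (ballF_mono G (Nat.mul_le_mul_right k (Nat.le_succ r))) (le_refl R))
      have hb0 : 1 ≤ b 0 := by
        rw [hb]
        exact Finset.card_pos.2 ⟨v, Finset.mem_inter.2 ⟨self_mem_ballF G v (0 * k), hv⟩⟩
      have hbub : ∀ r, b r ≤ R.card := fun r =>
        Finset.card_le_card (Finset.inter_subset_right)
      -- existence of a stopping radius
      have hex : ∃ r, t * b (r+1) < (t+1) * b r := by
        by_contra hcon
        push_neg at hcon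
        -- then b r ≥ r + 1 for all r
        have hgrow : ∀ r, r + 1 ≤ b r := by
          intro r
          induction r with
          | zero => exact hb0
          | succ r ihr =>
            have h1 : (t+1) * b r ≤ t * b (r+1) := hcon r
            have h2 : b r < b (r+1) := by
              by_contra hle
              push_neg at hle
              have : b (r+1) = b r := le_antisymm hle (hbmono r)
              rw [this] at h1
              nlinarith [hb0, hbmono r, ihr]
            omega
        have := hgrow R.card
        have := hbub R.card
        omega
      set r₀ := Nat.find hex with hr₀
      have hstop : t * b (r₀+1) < (t+1) * b r₀ := Nat.find_spec hex
      have hbefore : ∀ r < r₀, (t+1) * b r ≤ t * b (r+1) := by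
        intro r hr
        have := Nat.find_min hex hr
        omega
      -- radius bound
      have hradb : ∀ r ≤ r₀, (t+1)^r * b 0 ≤ t^r * b r := by
        intro r hr
        induction r with
        | zero => simp
        | succ r ihr =>
          have h1 : (t+1) * b r ≤ t * b (r+1) := hbefore r (by omega)
          have h2 := ihr (by omega)
          calc (t+1)^(r+1) * b 0 = (t+1) * ((t+1)^r * b 0) := by ring
            _ ≤ (t+1) * (t^r * b r) := Nat.mul_le_mul_left _ h2
            _ = t^r * ((t+1) * b r) := by ring
            _ ≤ t^r * (t * b (r+1)) := Nat.mul_le_mul_left _ h1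
            _ = t^(r+1) * b (r+1) := by ring
      have hrad : (t+1)^r₀ ≤ Fintype.card V * t^r₀ := by
        calc (t+1)^r₀ = (t+1)^r₀ * 1 := by ring
          _ ≤ (t+1)^r₀ * b 0 := Nat.mul_le_mul_left _ hb0
          _ ≤ t^r₀ * b r₀ := hradb r₀ le_rfl
          _ ≤ t^r₀ * R.card := Nat.mul_le_mul_left _ (hbub r₀)
          _ ≤ t^r₀ * Fintype.card V := Nat.mul_le_mul_left _ (Finset.card_le_univ R)
          _ = Fintype.card V * t^r₀ := by ring
      -- define cluster, shell, rest
      set B0 : Finset V := ballF G v (r₀ * k) ∩ R with hB0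
      set B1 : Finset V := ballF G v ((r₀+1) * k) ∩ R with hB1
      have hB01 : B0 ⊆ B1 := Finset.inter_subset_inter
        (ballF_mono G (Nat.mul_le_mul_right k (Nat.le_succ r₀))) (le_refl R)
      set S : Finset V := B1 \ B0 with hS
      set R' : Finset V := R \ B1 with hR'
      have hvB0 : v ∈ B0 := Finset.mem_inter.2 ⟨self_mem_ballF G v _, hv⟩
      have h2 : S.card + B0.card = B1.card := Finset.card_sdiff_add_card_eq_card hB01
      have hts : t * S.card < B0.card := by
        have e0 : b r₀ = B0.card := rfl
        have e1 : b (r₀+1) = B1.card := rfl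
        rw [e0, e1] at hstop
        have hkey : t * B0.card + t * S.card < t * B0.card + B0.card := by
          calc t * B0.card + t * S.card = t * B1.card := by rw [← h2]; ring
            _ < (t+1) * B0.card := hstop
            _ = t * B0.card + B0.card := by ring
        exact Nat.lt_of_add_lt_add_left hkey
      have hR'card : R'.card < R.card := by
        apply Finset.card_lt_card
        constructor
        · exact Finset.sdiff_subset
        · intro hsub
          have hvR' := hsub hv
          rw [hR', Finset.mem_sdiff] at hvR'
          exact hvR'.2 (hB01 hvB0)
      obtain ⟨cs', D', hsub', hpair', hun', hdisj', hsize'⟩ :=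
        ih R' (by omega)
      refine ⟨(v, r₀, B0) :: cs', S ∪ D', ?_, ?_, ?_, ?_, ?_⟩
      · intro e he
        rcases List.mem_cons.1 he with rfl | he'
        · exact ⟨Finset.inter_subset_left, hrad⟩
        · exact hsub' e he'
      · refine List.pairwise_cons.2 ⟨?_, hpair'⟩
        intro e' he' x hx hxball
        -- x is in a cluster of cs', so x ∈ R' = R \ B1, but x ∈ ball ∩ R ⊆ B1
        have hxR' : x ∈ R' := by
          have : x ∈ bigU cs' ∪ D' := Finset.mem_union_left _ (mem_bigU.2 ⟨e', he', hx⟩)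
          rwa [← hun'] at this
        rw [hR', Finset.mem_sdiff] at hxR'
        exact hxR'.2 (Finset.mem_inter.2 ⟨hxball, hxR'.1⟩)
      · -- R = (B0 ∪ bigU cs') ∪ (S ∪ D')
        have h1 : R = B1 ∪ R' := by
          rw [hR', Finset.union_sdiff_of_subset Finset.inter_subset_right]
        have h2 : B1 = B0 ∪ S := by
          rw [hS, Finset.union_sdiff_of_subset hB01]
        rw [h1, h2, hun']
        show B0 ∪ S ∪ (bigU cs' ∪ D') = bigU ((v, r₀, B0) :: cs') ∪ (S ∪ D')
        have : bigU ((v, r₀, B0) :: cs') = B0 ∪ bigU cs' := rfl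
        rw [this]
        ext x; simp [Finset.mem_union]; tauto
      · intro e he
        rcases List.mem_cons.1 he with rfl | he'
        · show Disjoint B0 (S ∪ D')
          rw [Finset.disjoint_union_right]
          constructor
          · exact Finset.disjoint_sdiff
          · -- D' ⊆ R' which is disjoint from B1 ⊇ B0
            rw [Finset.disjoint_left]
            intro x hx hxD'
            have hxR' : x ∈ R' := by
              have : x ∈ bigU cs' ∪ D' := Finset.mem_union_right _ hxD'
              rwa [← hun'] at this
            rw [hR', Finset.mem_sdiff] at hxR'
            exact hxR'.2 (hB01 hx)
        · rw [Finset.disjoint_union_right]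
          refine ⟨?_, hdisj' e he'⟩
          -- cluster of e ⊆ R' disjoint from S ⊆ B1
          rw [Finset.disjoint_left]
          intro x hx hxS
          have hxR' : x ∈ R' := by
            have : x ∈ bigU cs' ∪ D' := Finset.mem_union_left _ (mem_bigU.2 ⟨e, he', hx⟩)
            rwa [← hun'] at this
          rw [hR', Finset.mem_sdiff] at hxR'
          exact hxR'.2 (Finset.mem_sdiff.1 hxS).1
      · -- (t+1) * (S ∪ D').card ≤ R.card
        have h1 : (S ∪ D').card ≤ S.card + D'.card := Finset.card_union_le S D'
        have h3 : R'.card + B1.card = R.card :=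
          Finset.card_sdiff_add_card_eq_card Finset.inter_subset_right
        calc (t+1) * (S ∪ D').card ≤ (t+1) * (S.card + D'.card) := Nat.mul_le_mul_left _ h1
          _ = (t * S.card + S.card) + (t+1) * D'.card := by ring
          _ ≤ (t * S.card + S.card) + R'.card := Nat.add_le_add_left hsize' _
          _ ≤ R.card := by omega

lemma cluster_subset_bigU {cs : List (V × ℕ × Finset V)} {e : V × ℕ × Finset V}
    (he : e ∈ cs) : e.2.2 ⊆ bigU cs :=
  fun x hx => mem_bigU.2 ⟨e, he, hx⟩

lemma decompose (k t : ℕ) (ht : 1 ≤ t) : ∀ (m : ℕ) (R : Finset V), R.card < (t+1)^m →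
    ∃ colors : Fin m → List (V × ℕ × Finset V),
      (∀ c, ∀ e ∈ colors c, e.2.2 ⊆ ballF G e.1 (e.2.1 * k) ∧
          (t+1)^e.2.1 ≤ Fintype.card V * t^e.2.1) ∧
      (∀ c, (colors c).Pairwise (fun a b => ∀ x ∈ b.2.2, x ∉ ballF G a.1 ((a.2.1+1) * k))) ∧
      (∀ c, ∀ e ∈ colors c, e.2.2 ⊆ R) ∧
      (∀ x ∈ R, ∃ (c : Fin m) (i : ℕ) (h : i < (colors c).length),
          x ∈ ((colors c).get ⟨i, h⟩).2.2) ∧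
      (∀ x (c c' : Fin m) (i i' : ℕ) (h : i < (colors c).length) (h' : i' < (colors c').length),
          x ∈ ((colors c).get ⟨i, h⟩).2.2 → x ∈ ((colors c').get ⟨i', h'⟩).2.2 →
          c = c' ∧ i = i') := by
  intro m
  induction m with
  | zero =>
    intro R hR
    have : R = ∅ := Finset.card_eq_zero.1 (Nat.lt_one_iff.1 (by rwa [pow_zero] at hR))
    exact ⟨Fin.elim0, fun c => c.elim0, fun c => c.elim0, fun c => c.elim0,
      fun x hx => by simp [this] at hx, fun x c => c.elim0⟩
  | succ m ihm =>
    intro R hR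
    obtain ⟨cs, D, hsub, hpair, hun, hdisj, hsize⟩ := carve G k t ht R.card R le_rfl
    have hD : D.card < (t+1)^m := by
      have h1 : (t+1) * D.card < (t+1) * (t+1)^m := by
        calc (t+1) * D.card ≤ R.card := hsize
          _ < (t+1)^(m+1) := hR
          _ = (t+1) * (t+1)^m := by ring
      exact Nat.lt_of_mul_lt_mul_left h1
    obtain ⟨colors', h1', h2', h3', h4', h5'⟩ := ihm D hD
    refine ⟨Fin.cons cs colors', ?_, ?_, ?_, ?_, ?_⟩
    · intro c
      induction c using Fin.cases with
      | zero => simpa using hsub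
      | succ c => simpa using h1' c
    · intro c
      induction c using Fin.cases with
      | zero => simpa using hpair
      | succ c => simpa using h2' c
    · intro c
      induction c using Fin.cases with
      | zero =>
        intro e he
        simp only [Fin.cons_zero] at he
        exact (cluster_subset_bigU he).trans (by rw [hun]; exact Finset.subset_union_left)
      | succ c =>
        intro e he
        simp only [Fin.cons_succ] at he
        exact (h3' c e he).trans (by rw [hun]; exact Finset.subset_union_right)
    · intro x hx
      rw [hun, Finset.mem_union] at hx
      rcases hx with hx | hx
      · obtain ⟨e, he, hxe⟩ := mem_bigU.1 hx
        obtain ⟨i, hi⟩ := List.mem_iff_get.1 he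
        refine ⟨0, i.1, i.2, ?_⟩
        show x ∈ (cs.get ⟨i.1, i.2⟩).2.2
        rw [Fin.eta, hi]
        exact hxe
      · obtain ⟨c, i, h, hxc⟩ := h4' x hx
        exact ⟨c.succ, i, by simpa using h, by simpa using hxc⟩
    · intro x c c' i i' h h' hxc hxc'
      induction c using Fin.cases with
      | zero =>
        induction c' using Fin.cases with
        | zero =>
          simp only [Fin.cons_zero] at h h' hxc hxc'
          constructor
          · rfl
          · by_contra hne
            rcases Nat.lt_or_ge i i' with hlt | hge
            · have hp := (List.pairwise_iff_get.1 hpair) ⟨i, h⟩ ⟨i', h'⟩ hlt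
              have hball : x ∈ ballF G (cs.get ⟨i,h⟩).1 (((cs.get ⟨i,h⟩).2.1 + 1) * k) :=
                ballF_mono G (Nat.mul_le_mul_right k (Nat.le_succ _))
                  ((hsub _ (List.get_mem cs _)).1 hxc)
              exact hp x hxc' hball
            · have hlt' : i' < i := by omega
              have hp := (List.pairwise_iff_get.1 hpair) ⟨i', h'⟩ ⟨i, h⟩ hlt'
              have hball : x ∈ ballF G (cs.get ⟨i',h'⟩).1 (((cs.get ⟨i',h'⟩).2.1 + 1) * k) :=
                ballF_mono G (Nat.mul_le_mul_right k (Nat.le_succ _))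
                  ((hsub _ (List.get_mem cs _)).1 hxc')
              exact hp x hxc hball
        | succ c' =>
          exfalso
          simp only [Fin.cons_zero] at h hxc
          simp only [Fin.cons_succ] at h' hxc'
          have hxD : x ∈ D := h3' c' _ (List.get_mem _ _) hxc'
          exact (Finset.disjoint_left.1 (hdisj _ (List.get_mem cs _))) hxc hxD
      | succ c =>
        induction c' using Fin.cases with
        | zero =>
          exfalso
          simp only [Fin.cons_succ] at h hxc
          simp only [Fin.cons_zero] at h' hxc'
          have hxD : x ∈ D := h3' c _ (List.get_mem _ _) hxc
          exact (Finset.disjoint_left.1 (hdisj _ (List.get_mem cs _))) hxc' hxD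
        | succ c' =>
          simp only [Fin.cons_succ] at h h' hxc hxc'
          obtain ⟨hcc, hii⟩ := h5' x c c' i i' h h' hxc hxc'
          exact ⟨by rw [hcc], hii⟩

lemma ball_walk (v : V) (m : ℕ) {u : V} (hu : u ∈ ((ballF G v m : Finset V) : Set V)) :
    ∃ q : ((⊤ : G.Subgraph).induce ((ballF G v m : Finset V) : Set V)).coe.Walk
      ⟨v, by exact_mod_cast self_mem_ballF G v m⟩ ⟨u, hu⟩, q.length ≤ m := by
  obtain ⟨p, hp⟩ := (mem_ballF G).1 (by exact_mod_cast hu)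
  have hsupp : ∀ x ∈ p.support, x ∈ ((ballF G v m : Finset V) : Set V) := by
    intro x hx
    exact_mod_cast support_subset_ballF G p hp x hx
  obtain ⟨q, hq⟩ := walk_lift G p hsupp (by exact_mod_cast self_mem_ballF G v m) hu
  exact ⟨q, by omega⟩

/-- Build a cluster collection from a carved color class. -/
noncomputable def mkColl (β κ k : ℕ) (cs : List (V × ℕ × Finset V))
    (hsub : ∀ e ∈ cs, e.2.2 ⊆ ballF G e.1 (e.2.1 * k))
    (hβ : ∀ e ∈ cs, 2 * (e.2.1 * k) ≤ β)
    (hκ : cs.length ≤ κ)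
    (huniq : ∀ x (i i' : ℕ) (h : i < cs.length) (h' : i' < cs.length),
        x ∈ (cs.get ⟨i,h⟩).2.2 → x ∈ (cs.get ⟨i',h'⟩).2.2 → i = i') :
    ClusterCollection G β κ where
  p := cs.length
  cluster i := ((cs.get i).2.2 : Finset V)
  tree i := (⊤ : G.Subgraph).induce ((ballF G (cs.get i).1 ((cs.get i).2.1 * k) : Finset V) : Set V)
  disjoint i j hij := by
    rw [Set.disjoint_left]
    intro x hx hx'
    exact hij (Fin.ext (huniq x i.1 j.1 i.2 j.2 (by exact_mod_cast hx) (by exact_mod_cast hx')))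
  subset_tree i := by
    intro x hx
    show x ∈ ((ballF G (cs.get i).1 ((cs.get i).2.1 * k) : Finset V) : Set V)
    exact_mod_cast hsub _ (List.get_mem cs _) (by exact_mod_cast hx)
  connected i := by
    intro u w
    obtain ⟨q1, _⟩ := ball_walk G (cs.get i).1 ((cs.get i).2.1 * k) u.2
    obtain ⟨q2, _⟩ := ball_walk G (cs.get i).1 ((cs.get i).2.1 * k) w.2
    exact ⟨q1.reverse.append q2⟩
  radius i u w := by
    obtain ⟨q1, h1⟩ := ball_walk G (cs.get i).1 ((cs.get i).2.1 * k) u.2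
    obtain ⟨q2, h2⟩ := ball_walk G (cs.get i).1 ((cs.get i).2.1 * k) w.2
    refine ⟨q1.reverse.append q2, ?_⟩
    rw [Walk.length_append, Walk.length_reverse]
    have := hβ _ (List.get_mem cs ⟨i.1, i.2⟩)
    rw [Fin.eta] at this
    omega
  congestion e he := by
    calc {i : Fin cs.length | e ∈ ((⊤ : G.Subgraph).induce
          ((ballF G (cs.get i).1 ((cs.get i).2.1 * k) : Finset V) : Set V)).edgeSet}.ncard
        ≤ (Set.univ : Set (Fin cs.length)).ncard :=
          Set.ncard_le_ncard (Set.subset_univ _) Set.finite_univ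
      _ = cs.length := by rw [Set.ncard_univ]; simp
      _ ≤ κ := hκ

/-- Separation of a cluster inside a ball from a cluster avoiding the bigger ball. -/
lemma farApart_of_balls (v0 : V) (r k : ℕ) (A B : Finset V)
    (hA : A ⊆ ballF G v0 (r * k)) (hB : ∀ x ∈ B, x ∉ ballF G v0 ((r+1) * k)) :
    FarApart G k (A : Set V) (B : Set V) ∧ FarApart G k (B : Set V) (A : Set V) := by
  constructor
  · intro u hu w hw p
    by_contra hlen
    push_neg at hlen
    obtain ⟨q, hq⟩ := (mem_ballF G).1 (hA (by exact_mod_cast hu))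
    refine hB w (by exact_mod_cast hw) ((mem_ballF G).2 ⟨q.append p, ?_⟩)
    rw [Walk.length_append]
    have : (r+1) * k = r * k + k := by ring
    omega
  · intro w hw u hu p
    by_contra hlen
    push_neg at hlen
    obtain ⟨q, hq⟩ := (mem_ballF G).1 (hA (by exact_mod_cast hu))
    refine hB w (by exact_mod_cast hw) ((mem_ballF G).2 ⟨q.append p.reverse, ?_⟩)
    rw [Walk.length_append, Walk.length_reverse]
    have : (r+1) * k = r * k + k := by ring
    omega

lemma radius_bound (n t r L k : ℕ) (hn : 2 ≤ n) (hL : 1 ≤ L)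
    (hx1 : (1:ℝ) ≤ (n:ℝ)^((1:ℝ)/L)) (ht : t = ⌈(n:ℝ)^((1:ℝ)/L)⌉₊)
    (hr : (t+1)^r ≤ n * t^r) (hlogL : (L:ℝ) ≤ Real.logb 2 n) :
    ((2*(r*k) : ℕ) : ℝ) ≤ 6 * k * (n:ℝ)^((1:ℝ)/L) * (Real.logb 2 n)^3 := by
  set x : ℝ := (n:ℝ)^((1:ℝ)/L) with hxdef
  have ht1 : (1:ℝ) ≤ (t:ℝ) := by
    have h1 : 1 ≤ t := by rw [ht]; exact Nat.ceil_pos.2 (by linarith)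
    exact_mod_cast h1
  have htpos : (0:ℝ) < t := by linarith
  have ht1pos : (0:ℝ) < (t:ℝ) + 1 := by linarith
  have hnpos : (0:ℝ) < n := by positivity
  -- log step
  have hrR : ((t:ℝ)+1)^r ≤ (n:ℝ) * (t:ℝ)^r := by exact_mod_cast hr
  have hlog1 : (r:ℝ) * Real.log ((t:ℝ)+1) ≤ Real.log n + (r:ℝ) * Real.log t := by
    have hpos1 : (0:ℝ) < ((t:ℝ)+1)^r := by positivity
    have h := Real.log_le_log (by positivity) hrR
    rw [Real.log_pow, Real.log_mul (ne_of_gt hnpos) (by positivity), Real.log_pow] at h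
    exact_mod_cast h
  have hgap : 1/((t:ℝ)+1) ≤ Real.log ((t:ℝ)+1) - Real.log t := by
    have hq : (0:ℝ) < (t:ℝ)/((t:ℝ)+1) := by positivity
    have h := Real.log_le_sub_one_of_pos hq
    rw [Real.log_div (ne_of_gt htpos) (ne_of_gt ht1pos)] at h
    have : (t:ℝ)/((t:ℝ)+1) - 1 = -(1/((t:ℝ)+1)) := by field_simp; ring
    linarith [this ▸ h]
  have hrle : (r:ℝ) ≤ ((t:ℝ)+1) * Real.log n := by
    have h1 : (r:ℝ) * (1/((t:ℝ)+1)) ≤ (r:ℝ) * (Real.log ((t:ℝ)+1) - Real.log t) :=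
      mul_le_mul_of_nonneg_left hgap (by positivity)
    have h2 : (r:ℝ) * (Real.log ((t:ℝ)+1) - Real.log t) ≤ Real.log n := by linarith
    have h3 : (r:ℝ) * (1/((t:ℝ)+1)) ≤ Real.log n := le_trans h1 h2
    rw [mul_one_div, div_le_iff₀ ht1pos] at h3
    linarith [h3]
  have ht3x : (t:ℝ) + 1 ≤ 3 * x := by
    have h := Nat.ceil_lt_add_one (le_trans zero_le_one hx1)
    rw [← ht] at h
    linarith
  have hn1 : (1:ℝ) ≤ (n:ℝ) := by exact_mod_cast le_trans (by norm_num) hn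
  have hlogn_nonneg : (0:ℝ) ≤ Real.log n := Real.log_nonneg hn1
  have hlb1 : (1:ℝ) ≤ Real.logb 2 n := le_trans (by exact_mod_cast hL) hlogL
  have hln_le_lb : Real.log n ≤ Real.logb 2 n := by
    rw [Real.logb, le_div_iff₀ (Real.log_pos one_lt_two)]
    nlinarith [Real.log_two_lt_d9, hlogn_nonneg]
  have hlb3 : Real.log n ≤ (Real.logb 2 n)^3 := by
    calc Real.log n ≤ Real.logb 2 n := hln_le_lb
      _ ≤ (Real.logb 2 n)^3 := le_self_pow₀ hlb1 (by norm_num)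
  have hkpos : (0:ℝ) ≤ (k:ℝ) := by positivity
  have hxpos : (0:ℝ) ≤ x := by linarith
  push_cast
  have s1 : (k:ℝ) * (r:ℝ) ≤ (k:ℝ)*(((t:ℝ)+1)*Real.log n) :=
    mul_le_mul_of_nonneg_left hrle hkpos
  have s2' : ((t:ℝ)+1)*Real.log n ≤ (3*x)*Real.log n :=
    mul_le_mul_of_nonneg_right ht3x hlogn_nonneg
  have s2 : (k:ℝ)*(((t:ℝ)+1)*Real.log n) ≤ (k:ℝ)*((3*x)*Real.log n) :=
    mul_le_mul_of_nonneg_left s2' hkpos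
  have s3 : 6*(k:ℝ)*x*Real.log n ≤ 6*(k:ℝ)*x*(Real.logb 2 n)^3 :=
    mul_le_mul_of_nonneg_left hlb3 (by positivity)
  calc 2*((r:ℝ)*(k:ℝ)) = 2*((k:ℝ)*(r:ℝ)) := by ring
    _ ≤ 2*((k:ℝ)*(((t:ℝ)+1) * Real.log n)) := by linarith
    _ ≤ 2*((k:ℝ)*((3*x) * Real.log n)) := by linarith
    _ = 6*(k:ℝ)*x*Real.log n := by ring
    _ ≤ 6*(k:ℝ)*x*(Real.logb 2 n)^3 := s3

theorem statement2 :
    ∃ c : ℝ, 0 < c ∧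
      ∀ (V : Type) [Fintype V] (G : SimpleGraph V),
        2 ≤ Fintype.card V →
        ∀ k : ℕ, 1 ≤ k →
        ∀ L : ℕ, 1 ≤ L → (L : ℝ) ≤ Real.logb 2 (Fintype.card V) →
          ∃ κ : ℕ, Nonempty (NetworkDecomposition G L
            ⌈c * k * (Fintype.card V : ℝ) ^ ((1 : ℝ) / L) *
              (Real.logb 2 (Fintype.card V)) ^ 3⌉₊
            κ
            k) := by
  refine ⟨6, by norm_num, ?_⟩
  intro V _ G hn k hk L hL hlogL
  set n := Fintype.card V with hndef
  set x : ℝ := (n:ℝ)^((1:ℝ)/L) with hxdef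
  set t := ⌈x⌉₊ with htdef
  set β := ⌈(6:ℝ) * k * x * (Real.logb 2 n)^3⌉₊ with hβdef
  have hLne : (L:ℝ) ≠ 0 := by
    have : 0 < L := hL
    exact_mod_cast this.ne'
  have hx1 : (1:ℝ) ≤ x := Real.one_le_rpow (by exact_mod_cast le_trans (by norm_num) hn)
    (by positivity)
  have ht1 : 1 ≤ t := Nat.ceil_pos.2 (by linarith)
  have hcard : (Finset.univ : Finset V).card < (t+1)^L := by
    have hxL : ((n:ℝ)) = x^(L:ℕ) := by
      rw [hxdef, ← Real.rpow_natCast ((n:ℝ)^((1:ℝ)/L)) L, ← Real.rpow_mul (by positivity),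
        one_div, inv_mul_cancel₀ hLne, Real.rpow_one]
    have hnt : (n:ℝ) ≤ (t:ℝ)^(L:ℕ) := by
      rw [hxL]
      exact pow_le_pow_left₀ (by linarith) (Nat.le_ceil x) L
    have hnt' : n ≤ t^L := by exact_mod_cast hnt
    have hlt : t^L < (t+1)^L := Nat.pow_lt_pow_left (Nat.lt_succ_self t) (by omega)
    rw [Finset.card_univ, ← hndef]
    omega
  obtain ⟨colors, h1, h2, h3, h4, h5⟩ := decompose G k t ht1 L Finset.univ hcard
  have hβ : ∀ c, ∀ e ∈ colors c, 2 * (e.2.1 * k) ≤ β := by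
    intro c e he
    have hreal := radius_bound n t e.2.1 L k hn hL (hxdef ▸ hx1) (by rw [htdef, hxdef])
      (h1 c e he).2 hlogL
    have := Nat.ceil_mono hreal
    rwa [Nat.ceil_natCast] at this
  set κ := Finset.univ.sup (fun c : Fin L => (colors c).length) with hκdef
  refine ⟨κ, ⟨?_⟩⟩
  refine
    { coll := fun c => mkColl G β κ k (colors c) (fun e he => (h1 c e he).1) (hβ c)
        (Finset.le_sup (f := fun c : Fin L => (colors c).length) (Finset.mem_univ c))
        (fun y i i' h h' hy hy' => (h5 y c c i i' h h' hy hy').2),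
      cover := ?_, sep := ?_ }
  · intro v
    obtain ⟨c, i, h, hx⟩ := h4 v (Finset.mem_univ v)
    refine ⟨⟨c, ⟨i, h⟩⟩, by exact_mod_cast hx, ?_⟩
    rintro ⟨c', j⟩ hmem
    obtain ⟨hc, hi⟩ := h5 v c' c j.1 i j.2 h (by exact_mod_cast hmem) (by exact_mod_cast hx)
    subst hc
    exact congrArg (Sigma.mk c') (Fin.ext hi)
  · intro c i j hij
    rcases Nat.lt_or_ge i.1 j.1 with hlt | hge
    · have hp := (List.pairwise_iff_get.1 (h2 c)) ⟨i.1, i.2⟩ ⟨j.1, j.2⟩ hlt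
      have hA := (h1 c _ (List.get_mem (colors c) ⟨i.1, i.2⟩)).1
      have := farApart_of_balls G ((colors c).get ⟨i.1, i.2⟩).1 ((colors c).get ⟨i.1, i.2⟩).2.1 k
        ((colors c).get ⟨i.1, i.2⟩).2.2 ((colors c).get ⟨j.1, j.2⟩).2.2 hA hp
      exact this.1
    · have hlt : j.1 < i.1 := by
        rcases Nat.lt_or_ge j.1 i.1 with h' | h'
        · exact h'
        · exact absurd (Fin.ext (le_antisymm h' hge)) hij
      have hp := (List.pairwise_iff_get.1 (h2 c)) ⟨j.1, j.2⟩ ⟨i.1, i.2⟩ hlt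
      have hA := (h1 c _ (List.get_mem (colors c) ⟨j.1, j.2⟩)).1
      have := farApart_of_balls G ((colors c).get ⟨j.1, j.2⟩).1 ((colors c).get ⟨j.1, j.2⟩).2.1 k
        ((colors c).get ⟨j.1, j.2⟩).2.2 ((colors c).get ⟨i.1, i.2⟩).2.2 hA hp
      exact this.2
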